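/- Let V be a complex inner product space and let A, B : V → V be symmetric linear maps. Suppose C ≥ 0 is a real constant such that |Re⟨A(Bf) + B(Af), f⟩| ≤ C·‖Bf‖² for every f ∈ V. If t > C is a real number and f ∈ V satisfies Af + t·Bf = 0, then Af = 0 and Bf = 0. In particular, if B is injective, then the kernel of A + t·B is zero for every t > C. -/
import Mathlib


open scoped InnerProductSpace

/-- If `A, B` are symmetric operators on a complex inner product space, the
anticommutator `AB + BA` is controlled by `‖Bf‖²` with constant `C ≥ 0`, and `t > C`,
then `Af + t·Bf = 0` forces `Af = 0` and `Bf = 0`; in particular if `B` is injective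
the kernel of `A + t·B` is zero. -/
theorem vanishing_kernel {V : Type*} [NormedAddCommGroup V] [InnerProductSpace ℂ V]
    (A B : V →ₗ[ℂ] V)
    (hA : ∀ v w : V, ⟪A v, w⟫_ℂ = ⟪v, A w⟫_ℂ)
    (hB : ∀ v w : V, ⟪B v, w⟫_ℂ = ⟪v, B w⟫_ℂ)
    (C : ℝ) (hC : 0 ≤ C)
    (hest : ∀ f : V, |(⟪A (B f) + B (A f), f⟫_ℂ).re| ≤ C * ‖B f‖ ^ 2) :
    (∀ t : ℝ, C < t → ∀ f : V, A f + (t : ℂ) • B f = 0 → A f = 0 ∧ B f = 0) ∧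
    (Function.Injective B →
      ∀ t : ℝ, C < t → ∀ f : V, A f + (t : ℂ) • B f = 0 → f = 0) := by
  have main : ∀ t : ℝ, C < t → ∀ f : V, A f + (t : ℂ) • B f = 0 → A f = 0 ∧ B f = 0 := by
    intro t ht f hf
    have ht0 : 0 < t := lt_of_le_of_lt hC ht
    have hAf : A f = -((t : ℂ) • B f) := by
      rw [← add_eq_zero_iff_eq_neg]; exact hf
    have key : (⟪A (B f) + B (A f), f⟫_ℂ).re = -(2 * t * ‖B f‖ ^ 2) := by
      have h1 : ⟪A (B f), f⟫_ℂ = ⟪B f, A f⟫_ℂ := hA _ _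
      have h2 : ⟪B (A f), f⟫_ℂ = ⟪A f, B f⟫_ℂ := hB _ _
      rw [inner_add_left, h1, h2, hAf]
      rw [inner_neg_right, inner_neg_left, inner_smul_right, inner_smul_left,
        inner_self_eq_norm_sq_to_K (𝕜 := ℂ)]
      simp [← Complex.ofReal_pow]
      ring
    have hest' := hest f
    rw [key, abs_neg] at hest'
    have habs : 2 * t * ‖B f‖ ^ 2 ≤ C * ‖B f‖ ^ 2 :=
      le_trans (le_abs_self _) hest'
    have hB0 : B f = 0 := by
      by_contra h
      have hn : 0 < ‖B f‖ ^ 2 := by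
        have := norm_pos_iff.mpr h
        positivity
      nlinarith
    have hA0 : A f = 0 := by rw [hAf, hB0, smul_zero, neg_zero]
    exact ⟨hA0, hB0⟩
  exact ⟨main, fun hinj t ht f hf => hinj (by rw [(main t ht f hf).2, map_zero])⟩
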